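/- Every subset Q ⊆ S(W) is a suspension from a unique minimal subspace: there exists a unique linear subspace U₀ ⊆ W such that Q is a suspension from U₀ and U₀ ⊆ V for every linear subspace V ⊆ W from which Q is a suspension. (In particular Q is a suspension from every subspace containing U₀.) -/

import Mathlib

variable {W : Type*} [NormedAddCommGroup W] [InnerProductSpace ℝ W] [FiniteDimensional ℝ W]

/-- The suspension of a subset `P` of the unit sphere `S(W)` from a linear subspace `V ⊆ W`:
the set of unit vectors `x` such that the orthogonal projection `P_V x` of `x` to `V` is zero,
or is nonzero and normalizes to a point of `P`. -/
noncomputable def susp (V : Submodule ℝ W) (P : Set W) : Set W :=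
  {x : W | ‖x‖ = 1 ∧
    (((Submodule.orthogonalProjectionOnto V x : W) = 0) ∨
      ((Submodule.orthogonalProjectionOnto V x : W) ≠ 0 ∧
        ‖(Submodule.orthogonalProjectionOnto V x : W)‖⁻¹ • (Submodule.orthogonalProjectionOnto V x : W) ∈ P))}

/-- `Q ⊆ S(W)` is a suspension from the linear subspace `V` if `Q = Susp_V(Q ∩ V)`. -/
def IsSuspensionFrom (Q : Set W) (V : Submodule ℝ W) : Prop :=
  Q = susp V (Q ∩ (V : Set W))

/-- The cone on `Q`: zero together with everything normalizing into `Q`. -/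
def coneMem (Q : Set W) (x : W) : Prop :=
  x = 0 ∨ (x ≠ 0 ∧ ‖x‖⁻¹ • x ∈ Q)

lemma coneMem_unit {Q : Set W} {x : W} (hx : ‖x‖ = 1) : coneMem Q x ↔ x ∈ Q := by
  have hx0 : x ≠ 0 := by intro h; rw [h] at hx; simp at hx
  simp [coneMem, hx0, hx]

lemma coneMem_smul (Q : Set W) {c : ℝ} (hc : 0 < c) (x : W) :
    coneMem Q (c • x) ↔ coneMem Q x := by
  rcases eq_or_ne x 0 with rfl | hx0
  · simp [coneMem]
  · have hc0 : c ≠ 0 := ne_of_gt hc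
    have hcx : c • x ≠ 0 := smul_ne_zero hc0 hx0
    have hxn : (0 : ℝ) < ‖x‖ := norm_pos_iff.mpr hx0
    have hnorm : ‖c • x‖⁻¹ • (c • x) = ‖x‖⁻¹ • x := by
      rw [norm_smul, Real.norm_eq_abs, abs_of_pos hc, smul_smul]
      congr 1
      field_simp
    simp [coneMem, hx0, hcx, hnorm]

lemma coneMem_proj_smul (Q : Set W) (V : Submodule ℝ W) {c : ℝ} (hc : 0 < c) (x : W) :
    coneMem Q ((Submodule.orthogonalProjectionOnto V (c • x) : W)) ↔
      coneMem Q ((Submodule.orthogonalProjectionOnto V x : W)) := by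
  have : (Submodule.orthogonalProjectionOnto V (c • x) : W) = c • (Submodule.orthogonalProjectionOnto V x : W) := by
    rw [map_smul]; rfl
  rw [this, coneMem_smul Q hc]

/-- A unit vector lies in `susp V (Q ∩ V)` iff its projection to `V` lies in the cone on `Q`. -/
lemma mem_susp_iff {Q : Set W} (V : Submodule ℝ W) {x : W} (hx : ‖x‖ = 1) :
    x ∈ susp V (Q ∩ (V : Set W)) ↔ coneMem Q ((Submodule.orthogonalProjectionOnto V x : W)) := by
  constructor
  · rintro ⟨-, h | ⟨hne, hmem, -⟩⟩
    · exact Or.inl h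
    · exact Or.inr ⟨hne, hmem⟩
  · rintro (h | ⟨hne, hmem⟩)
    · exact ⟨hx, Or.inl h⟩
    · refine ⟨hx, Or.inr ⟨hne, hmem, ?_⟩⟩
      exact Submodule.smul_mem V _ (Submodule.orthogonalProjectionOnto V x).2

/-- Suspension from `V` is the same as the cone membership factoring through projection to `V`. -/
lemma isSuspensionFrom_iff (Q : Set W) (hQ : Q ⊆ {x : W | ‖x‖ = 1}) (V : Submodule ℝ W) :
    IsSuspensionFrom Q V ↔
      ∀ x : W, coneMem Q x ↔ coneMem Q ((Submodule.orthogonalProjectionOnto V x : W)) := by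
  constructor
  · intro h x
    rcases eq_or_ne x 0 with rfl | hx0
    · simp [coneMem]
    · have hxn : (0 : ℝ) < ‖x‖ := norm_pos_iff.mpr hx0
      have hnx : (0 : ℝ) < ‖x‖⁻¹ := inv_pos.mpr hxn
      have hu : ‖(‖x‖⁻¹ • x)‖ = 1 := by
        rw [norm_smul, Real.norm_eq_abs, abs_of_pos hnx, inv_mul_cancel₀ (ne_of_gt hxn)]
      calc coneMem Q x ↔ ‖x‖⁻¹ • x ∈ Q := by
              simp [coneMem, hx0]
        _ ↔ ‖x‖⁻¹ • x ∈ susp V (Q ∩ (V : Set W)) := by rw [← h]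
        _ ↔ coneMem Q ((Submodule.orthogonalProjectionOnto V (‖x‖⁻¹ • x) : W)) := mem_susp_iff V hu
        _ ↔ coneMem Q ((Submodule.orthogonalProjectionOnto V x : W)) := coneMem_proj_smul Q V hnx x
  · intro h
    ext x
    constructor
    · intro hxQ
      have hx : ‖x‖ = 1 := hQ hxQ
      exact (mem_susp_iff V hx).2 ((h x).1 ((coneMem_unit hx).2 hxQ))
    · intro hxs
      have hx : ‖x‖ = 1 := hxs.1
      exact (coneMem_unit hx).1 ((h x).2 ((mem_susp_iff V hx).1 hxs))

/-- Cone membership factors through projection to `V` iff it is invariant under translations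
by elements of `Vᗮ`. -/
lemma proj_iff_translation (Q : Set W) (V : Submodule ℝ W) :
    (∀ x : W, coneMem Q x ↔ coneMem Q ((Submodule.orthogonalProjectionOnto V x : W))) ↔
      (∀ w ∈ Vᗮ, ∀ x : W, coneMem Q (x + w) ↔ coneMem Q x) := by
  constructor
  · intro h w hw x
    have hPw : (Submodule.orthogonalProjectionOnto V w : W) = 0 := by
      simpa using congrArg (fun z : V => (z : W))
        (Submodule.orthogonalProjectionOnto_apply_of_mem_orthogonal hw)
    have hpr : (Submodule.orthogonalProjectionOnto V (x + w) : W) = (Submodule.orthogonalProjectionOnto V x : W) := by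
      rw [map_add]; push_cast; rw [hPw, add_zero]
    rw [h (x + w), h x, hpr]
  · intro h x
    have hw : x - (Submodule.orthogonalProjectionOnto V x : W) ∈ Vᗮ :=
      V.sub_starProjection_mem_orthogonal x
    have := h _ hw ((Submodule.orthogonalProjectionOnto V x : W))
    rw [add_sub_cancel] at this
    exact this

theorem exists_unique_minimal_suspension (Q : Set W) (hQ : Q ⊆ {x : W | ‖x‖ = 1}) :
    (∃! U₀ : Submodule ℝ W, IsSuspensionFrom Q U₀ ∧
        ∀ V : Submodule ℝ W, IsSuspensionFrom Q V → U₀ ≤ V) ∧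
      ∀ U₀ V : Submodule ℝ W,
        (IsSuspensionFrom Q U₀ ∧ ∀ V' : Submodule ℝ W, IsSuspensionFrom Q V' → U₀ ≤ V') →
        U₀ ≤ V → IsSuspensionFrom Q V := by
  -- upward closure: if `Q` is a suspension from `U` and `U ≤ V`, it is a suspension from `V`.
  have upward : ∀ U V : Submodule ℝ W, IsSuspensionFrom Q U → U ≤ V → IsSuspensionFrom Q V := by
    intro U V hU hUV
    rw [isSuspensionFrom_iff Q hQ, proj_iff_translation] at hU ⊢
    intro w hw x
    exact hU w (Submodule.orthogonal_le hUV hw) x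
  -- the minimal subspace
  set S : Set (Submodule ℝ W) := {V | IsSuspensionFrom Q V} with hS
  set U₀ : Submodule ℝ W := sInf S with hU₀
  have hU₀orth : U₀ᗮ = ⨆ V : S, (V : Submodule ℝ W)ᗮ := by
    have h1 : (⨅ V : S, ((V : Submodule ℝ W)ᗮ)ᗮ) = (⨆ V : S, (V : Submodule ℝ W)ᗮ)ᗮ :=
      Submodule.iInf_orthogonal _
    have h2 : (⨅ V : S, ((V : Submodule ℝ W)ᗮ)ᗮ) = U₀ := by
      rw [hU₀, sInf_eq_iInf']
      exact iInf_congr fun V => Submodule.orthogonal_orthogonal _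
    rw [← h2, h1, Submodule.orthogonal_orthogonal]
  have hU₀susp : IsSuspensionFrom Q U₀ := by
    rw [isSuspensionFrom_iff Q hQ, proj_iff_translation]
    intro w hw
    rw [hU₀orth] at hw
    refine Submodule.iSup_induction (motive := fun w => ∀ x : W, coneMem Q (x + w) ↔ coneMem Q x)
      (fun V : S => (V : Submodule ℝ W)ᗮ) hw ?_ (by simp) ?_
    · intro V w hwV
      exact ((proj_iff_translation Q V).1 ((isSuspensionFrom_iff Q hQ V).1 V.2)) w hwV
    · intro a b ha hb x
      rw [← add_assoc, hb (x + a), ha x]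
  have hmin : ∀ V : Submodule ℝ W, IsSuspensionFrom Q V → U₀ ≤ V := fun V hV => sInf_le hV
  refine ⟨⟨U₀, ⟨hU₀susp, hmin⟩, ?_⟩, ?_⟩
  · rintro U ⟨hUsusp, hUmin⟩
    exact le_antisymm (hUmin U₀ hU₀susp) (hmin U hUsusp)
  · rintro U V ⟨hUsusp, -⟩ hUV
    exact upward U V hUsusp hUV
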